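/- Let K ≥ 1 be a natural number, λ ∈ (0, 1], ε ∈ (0, 1), and let w : Fin M → ℝ satisfy λ ≤ w j ≤ 1 for all j. Let b ∈ ℕ with b ≤ M and b > (4/λ) · log(1/ε) + (2K − 2)/λ, and set μ_b := ∑_{j < b} w j. Then μ_b > 2(K − 1) and exp(−(μ_b − K + 1)² / (2 μ_b)) < ε. -/
import Mathlib


/-- If every weight is at least `λ`, then any boundary index
`b > (4/λ)·log(1/ε) + (2K-2)/λ` satisfies `μ_b > 2(K-1)` and the Chernoff bound
`exp(-(μ_b - K + 1)² / (2 μ_b)) < ε`, where `μ_b = ∑_{j < b} w j`. -/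
theorem boundary_point_bound (M K : ℕ) (hK : 1 ≤ K) (lam ε : ℝ)
    (hlam0 : 0 < lam) (hlam1 : lam ≤ 1) (hε0 : 0 < ε) (hε1 : ε < 1)
    (w : Fin M → ℝ) (hw : ∀ j, lam ≤ w j ∧ w j ≤ 1)
    (b : ℕ) (hbM : b ≤ M)
    (hb : (4 / lam) * Real.log (1 / ε) + (2 * (K : ℝ) - 2) / lam < (b : ℝ)) :
    2 * ((K : ℝ) - 1) < (∑ j ∈ Finset.univ.filter (fun j : Fin M => (j : ℕ) < b), w j)
    ∧ Real.exp (-((∑ j ∈ Finset.univ.filter (fun j : Fin M => (j : ℕ) < b), w j)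
          - (K : ℝ) + 1) ^ 2
        / (2 * ∑ j ∈ Finset.univ.filter (fun j : Fin M => (j : ℕ) < b), w j)) < ε := by
  set S := ∑ j ∈ Finset.univ.filter (fun j : Fin M => (j : ℕ) < b), w j with hSdef
  set L := Real.log (1 / ε) with hLdef
  have hL : 0 < L := Real.log_pos (one_lt_one_div hε0 hε1)
  have hK1 : (1 : ℝ) ≤ (K : ℝ) := by exact_mod_cast hK
  -- cardinality of the filtered set is b
  have hcard : (Finset.univ.filter (fun j : Fin M => (j : ℕ) < b)).card = b := by
    rcases eq_or_lt_of_le hbM with h | h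
    · subst h
      have : (Finset.univ.filter (fun j : Fin b => (j : ℕ) < b)) = Finset.univ := by
        ext j; simp [j.is_lt]
      simp [this]
    · have heq : (Finset.univ.filter (fun j : Fin M => (j : ℕ) < b))
          = Finset.Iio (⟨b, h⟩ : Fin M) := by
        ext j; simp [Finset.mem_Iio, Fin.lt_def]
      rw [heq, Fin.card_Iio]
  -- lower bound on the sum
  have hSb : lam * b ≤ S := by
    have := Finset.sum_le_sum (f := fun _ : Fin M => lam) (g := w)
      (s := Finset.univ.filter (fun j : Fin M => (j : ℕ) < b))
      (fun j _ => (hw j).1)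
    simpa [Finset.sum_const, hcard, nsmul_eq_mul, mul_comm] using this
  have hb' : 4 * L + (2 * (K : ℝ) - 2) < lam * b := by
    have h1 : (4 * L + (2 * (K : ℝ) - 2)) / lam < (b : ℝ) := by
      rw [add_div]
      calc (4 * L) / lam + (2 * (K : ℝ) - 2) / lam
          = (4 / lam) * L + (2 * (K : ℝ) - 2) / lam := by ring
        _ < (b : ℝ) := hb
    calc 4 * L + (2 * (K : ℝ) - 2) = ((4 * L + (2 * (K : ℝ) - 2)) / lam) * lam := by
          field_simp
      _ < (b : ℝ) * lam := by
          exact mul_lt_mul_of_pos_right h1 hlam0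
      _ = lam * b := by ring
  have hS4 : 4 * L + 2 * ((K : ℝ) - 1) < S := by linarith
  have hS0 : 0 < S := by linarith
  have hfirst : 2 * ((K : ℝ) - 1) < S := by linarith
  refine ⟨hfirst, ?_⟩
  set t := S - (K : ℝ) + 1 with htdef
  have ht4 : 4 * L + ((K : ℝ) - 1) < t := by simp only [htdef]; linarith
  have ht0 : 0 < t := by linarith
  rw [← Real.exp_log hε0, Real.exp_lt_exp]
  have hlogε : Real.log ε = -L := by
    rw [hLdef, one_div, Real.log_inv, neg_neg]
  rw [hlogε, neg_div, neg_lt_neg_iff, lt_div_iff₀ (by linarith : (0:ℝ) < 2 * S)]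
  have hSt : S = t + ((K : ℝ) - 1) := by simp only [htdef]; ring
  nlinarith [mul_pos hL ht0, sq_nonneg (t - 4 * L), mul_nonneg hL.le (by linarith : (0:ℝ) ≤ (K:ℝ) - 1), mul_lt_mul_of_pos_right ht4 ht0]
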